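/- Let W be an affine Weyl group with set of simple reflections Σ (with respect to an alcove), Λ a W-invariant weight lattice, and for s ∈ Σ let π_s be the primitive affine function vanishing on the wall of s. Call s ∈ Σ ambiguous if ⟨Λ, π̄_s^∨⟩ = 2ℤ. If s ∈ Σ is ambiguous and t ∈ Σ is W-conjugate to s, then s = t. -/

import Mathlib

open RealInnerProductSpace

section AmbigAux

variable {V : Type*} [NormedAddCommGroup V] [InnerProductSpace ℝ V]

private lemma ambig_pair_self {g₀ : V} (h : g₀ ≠ 0) : ⟪g₀, (2 / ‖g₀‖ ^ 2) • g₀⟫ = 2 := by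
  rw [real_inner_smul_right, real_inner_self_eq_norm_sq]
  have h' : ‖g₀‖ ≠ 0 := norm_ne_zero_iff.mpr h
  field_simp

private lemma ambig_pf_comp (g : (V ≃ᵢ V) → V) (c : (V ≃ᵢ V) → ℝ) {u u₀ : V ≃ᵢ V}
    (h₀ : ∀ x : V, u₀ x = x - (⟪g u₀, x⟫ + c u₀) • ((2 / ‖g u₀‖ ^ 2) • g u₀)) (x : V) :
    ⟪g u, u₀ x⟫ + c u
      = (⟪g u, x⟫ + c u) - ⟪g u, (2 / ‖g u₀‖ ^ 2) • g u₀⟫ * (⟪g u₀, x⟫ + c u₀) := by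
  rw [h₀ x, inner_sub_right, real_inner_smul_right]
  ring

private lemma ambig_refl_sq {g : (V ≃ᵢ V) → V} {c : (V ≃ᵢ V) → ℝ} {u : V ≃ᵢ V}
    (h : ∀ x : V, u x = x - (⟪g u, x⟫ + c u) • ((2 / ‖g u‖ ^ 2) • g u))
    (hne : g u ≠ 0) : u * u = 1 := by
  apply IsometryEquiv.ext
  intro x
  have hp := ambig_pf_comp g c (u := u) (u₀ := u) h x
  rw [ambig_pair_self hne] at hp
  show u (u x) = x
  rw [h (u x), hp, h x]
  module

private lemma ambig_refl_comm {g : (V ≃ᵢ V) → V} {c : (V ≃ᵢ V) → ℝ} {u v : V ≃ᵢ V}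
    (hu : ∀ x : V, u x = x - (⟪g u, x⟫ + c u) • ((2 / ‖g u‖ ^ 2) • g u))
    (hv : ∀ x : V, v x = x - (⟪g v, x⟫ + c v) • ((2 / ‖g v‖ ^ 2) • g v))
    (horth : ⟪g u, g v⟫ = 0) : u * v = v * u := by
  apply IsometryEquiv.ext
  intro x
  have h1 : ⟪g u, (2 / ‖g v‖ ^ 2) • g v⟫ = 0 := by
    rw [real_inner_smul_right, horth]; ring
  have h2 : ⟪g v, (2 / ‖g u‖ ^ 2) • g u⟫ = 0 := by
    rw [real_inner_smul_right, real_inner_comm, horth]; ring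
  have hp1 := ambig_pf_comp g c (u := u) (u₀ := v) hv x
  have hp2 := ambig_pf_comp g c (u := v) (u₀ := u) hu x
  rw [h1] at hp1
  rw [h2] at hp2
  show u (v x) = v (u x)
  rw [hu (v x), hp1, hv x, hv (u x), hp2, hu x]
  module

private lemma ambig_odd_add_even {a b : ℤ} (hb : Even b) : Odd (a + b) ↔ Odd a := by
  constructor
  · intro h
    rcases Int.even_or_odd a with ha | ha
    · exact absurd h (Int.not_odd_iff_even.mpr (ha.add hb))
    · exact ha
  · intro ha
    exact ha.add_even hb

private lemma ambig_even_add_odd {a b : ℤ} (hb : Even b) : Odd (b + a) ↔ Odd a := by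
  rw [add_comm]; exact ambig_odd_add_even hb

private lemma ambig_even_sum {β : Type*} {F : Finset β} {f : β → ℤ}
    (h : ∀ x ∈ F, Even (f x)) : Even (∑ x ∈ F, f x) :=
  Finset.sum_induction f Even (fun _ _ ha hb => ha.add hb) Even.zero h

private lemma ambig_indep
    (S : Set (V ≃ᵢ V)) (g : (V ≃ᵢ V) → V) (c : (V ≃ᵢ V) → ℝ)
    (hobtuse : ∀ u ∈ S, ∀ v ∈ S, u ≠ v → ⟪g u, g v⟫ ≤ 0)
    (x₀ : V) (hx₀ : ∀ u ∈ S, 0 < ⟪g u, x₀⟫ + c u)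
    (C : Set (V ≃ᵢ V)) (hCS : C ⊆ S)
    (s : V ≃ᵢ V) (hsC : s ∈ C)
    (hconn : ∀ u ∈ C,
      Relation.ReflTransGen (fun a b => b ∈ C ∧ ⟪g a, g b⟫ ≠ 0) s u)
    (F : Finset (V ≃ᵢ V)) (hF : ↑F ⊆ C)
    (ρ : (V ≃ᵢ V) → ℝ)
    (hrel : ∀ x : V, ∑ u ∈ F, ρ u * (⟪g u, x⟫ + c u) = 0) :
    ∀ u ∈ F, ρ u = 0 := by
  classical
  have hFS : ∀ u ∈ F, u ∈ S := fun u hu => hCS (hF hu)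
  -- gradient part vanishes
  have hz : (∑ u ∈ F, ρ u • g u) = 0 := by
    have hy : ∀ y : V, ⟪∑ u ∈ F, ρ u • g u, y⟫ = 0 := by
      intro y
      have h1 : ∑ u ∈ F, (ρ u * (⟪g u, y⟫ + c u) - ρ u * (⟪g u, (0:V)⟫ + c u)) = 0 := by
        rw [Finset.sum_sub_distrib, hrel y, hrel 0, sub_zero]
      rw [sum_inner, ← h1]
      apply Finset.sum_congr rfl
      intro u _
      rw [real_inner_smul_left, inner_zero_right]
      ring
    exact inner_self_eq_zero.mp (hy _)
  have h2 : ∑ u ∈ F.filter (fun u => ¬ 0 < ρ u), ρ u • g u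
      = ∑ u ∈ F.filter (fun u => ρ u < 0), ρ u • g u := by
    refine (Finset.sum_subset (fun u hu => ?_) (fun u hu hnu => ?_)).symm
    · rw [Finset.mem_filter] at hu ⊢
      exact ⟨hu.1, not_lt.mpr hu.2.le⟩
    · rw [Finset.mem_filter] at hu
      have h0 : ρ u = 0 := by
        by_contra hne0
        rcases lt_or_gt_of_ne hne0 with hlt | hgt
        · exact hnu (Finset.mem_filter.mpr ⟨hu.1, hlt⟩)
        · exact hu.2 hgt
      rw [h0, zero_smul]
  have hsplit : (∑ u ∈ F.filter (fun u => 0 < ρ u), ρ u • g u)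
      + (∑ u ∈ F.filter (fun u => ρ u < 0), ρ u • g u) = 0 := by
    rw [← h2, Finset.sum_filter_add_sum_filter_not F (fun u => 0 < ρ u)]
    exact hz
  have hcross : 0 ≤ ⟪∑ u ∈ F.filter (fun u => 0 < ρ u), ρ u • g u,
      ∑ v ∈ F.filter (fun v => ρ v < 0), ρ v • g v⟫ := by
    rw [sum_inner]
    apply Finset.sum_nonneg
    intro u hu
    rw [inner_sum]
    apply Finset.sum_nonneg
    intro v hv
    rw [real_inner_smul_left, real_inner_smul_right]
    rw [Finset.mem_filter] at hu hv
    have huv : u ≠ v := by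
      rintro rfl
      exact absurd hu.2 (not_lt.mpr hv.2.le)
    have hob := hobtuse u (hFS u hu.1) v (hFS v hv.1) huv
    have h1 : 0 ≤ ρ v * ⟪g u, g v⟫ := by nlinarith [hv.2, hob]
    exact mul_nonneg hu.2.le h1
  have hzP : (∑ u ∈ F.filter (fun u => 0 < ρ u), ρ u • g u) = 0 := by
    have h3 : (∑ u ∈ F.filter (fun u => ρ u < 0), ρ u • g u)
        = -(∑ u ∈ F.filter (fun u => 0 < ρ u), ρ u • g u) := by
      rw [eq_neg_iff_add_eq_zero, add_comm]
      exact hsplit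
    have h4 := hcross
    rw [h3, inner_neg_right] at h4
    have h5 : ⟪∑ u ∈ F.filter (fun u => 0 < ρ u), ρ u • g u,
        ∑ u ∈ F.filter (fun u => 0 < ρ u), ρ u • g u⟫ ≤ 0 := by linarith
    exact inner_self_eq_zero.mp (le_antisymm h5 real_inner_self_nonneg)
  have hzM : (∑ u ∈ F.filter (fun u => ρ u < 0), ρ u • g u) = 0 := by
    rw [hzP, zero_add] at hsplit
    exact hsplit
  have horthP : ∀ q ∈ S, q ∉ F.filter (fun u => 0 < ρ u) →
      ∀ u ∈ F.filter (fun u => 0 < ρ u), ⟪g q, g u⟫ = 0 := by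
    intro q hqS hqP u huP
    have h0 : ∑ v ∈ F.filter (fun u => 0 < ρ u), ρ v * ⟪g q, g v⟫ = 0 := by
      have h6 := congrArg (fun z => ⟪g q, z⟫) hzP
      simpa [inner_sum, real_inner_smul_right] using h6
    have hterm : ∀ v ∈ F.filter (fun u => 0 < ρ u), ρ v * ⟪g q, g v⟫ ≤ 0 := by
      intro v hvP
      have hvP' := hvP
      rw [Finset.mem_filter] at hvP'
      have hqv : q ≠ v := by rintro rfl; exact hqP hvP
      have hob := hobtuse q hqS v (hFS v hvP'.1) hqv
      nlinarith [hvP'.2]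
    have h7 := (Finset.sum_eq_zero_iff_of_nonpos hterm).mp h0 u huP
    rw [Finset.mem_filter] at huP
    rcases mul_eq_zero.mp h7 with h | h
    · exact absurd h (ne_of_gt huP.2)
    · exact h
  have horthM : ∀ q ∈ S, q ∉ F.filter (fun u => ρ u < 0) →
      ∀ u ∈ F.filter (fun u => ρ u < 0), ⟪g q, g u⟫ = 0 := by
    intro q hqS hqM u huM
    have h0 : ∑ v ∈ F.filter (fun u => ρ u < 0), ρ v * ⟪g q, g v⟫ = 0 := by
      have h6 := congrArg (fun z => ⟪g q, z⟫) hzM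
      simpa [inner_sum, real_inner_smul_right] using h6
    have hterm : ∀ v ∈ F.filter (fun u => ρ u < 0), 0 ≤ ρ v * ⟪g q, g v⟫ := by
      intro v hvM
      have hvM' := hvM
      rw [Finset.mem_filter] at hvM'
      have hqv : q ≠ v := by rintro rfl; exact hqM hvM
      have hob := hobtuse q hqS v (hFS v hvM'.1) hqv
      nlinarith [hvM'.2]
    have h7 := (Finset.sum_eq_zero_iff_of_nonneg hterm).mp h0 u huM
    rw [Finset.mem_filter] at huM
    rcases mul_eq_zero.mp h7 with h | h
    · exact absurd h (ne_of_lt huM.2)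
    · exact h
  have hkey : ∀ (A : Finset (V ≃ᵢ V)), A ⊆ F →
      (∀ q ∈ S, q ∉ A → ∀ u ∈ A, ⟪g q, g u⟫ = 0) → A.Nonempty → s ∈ A := by
    rintro A hAF horth ⟨u₀, hu₀⟩
    have hu₀C : u₀ ∈ C := hF (hAF hu₀)
    have hpath := hconn u₀ hu₀C
    have main : ∀ u : V ≃ᵢ V,
        Relation.ReflTransGen (fun a b => b ∈ C ∧ ⟪g a, g b⟫ ≠ 0) s u → (u ∈ A → s ∈ A) := by
      intro u hu
      induction hu with
      | refl => exact fun h => h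
      | @tail b u hab hbu ih =>
        intro huA
        by_cases hbA : b ∈ A
        · exact ih hbA
        · have hbC : b ∈ C := by
            clear ih hbu
            induction hab with
            | refl => exact hsC
            | tail _ h _ => exact h.1
          exact absurd (horth b (hCS hbC) hbA u huA) hbu.2
    exact main u₀ hpath hu₀
  have hPM : ¬((F.filter (fun u => 0 < ρ u)).Nonempty ∧ (F.filter (fun u => ρ u < 0)).Nonempty) := by
    rintro ⟨hP, hM⟩
    have hsP := hkey _ (Finset.filter_subset _ _) horthP hP
    have hsM := hkey _ (Finset.filter_subset _ _) horthM hM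
    rw [Finset.mem_filter] at hsP hsM
    linarith [hsP.2, hsM.2]
  intro u huF
  rcases not_and_or.mp hPM with hP | hM
  · rw [Finset.not_nonempty_iff_eq_empty] at hP
    have hneg : ∀ v ∈ F, ρ v ≤ 0 := by
      intro v hv
      by_contra h
      have hmem : v ∈ F.filter (fun u => 0 < ρ u) := Finset.mem_filter.mpr ⟨hv, lt_of_not_ge h⟩
      rw [hP] at hmem
      exact absurd hmem (Finset.notMem_empty v)
    have hterm : ∀ v ∈ F, ρ v * (⟪g v, x₀⟫ + c v) ≤ 0 := by
      intro v hv
      have := hx₀ v (hFS v hv)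
      nlinarith [hneg v hv]
    have h8 := (Finset.sum_eq_zero_iff_of_nonpos hterm).mp (hrel x₀) u huF
    rcases mul_eq_zero.mp h8 with h | h
    · exact h
    · exact absurd h (ne_of_gt (hx₀ u (hFS u huF)))
  · rw [Finset.not_nonempty_iff_eq_empty] at hM
    have hpos : ∀ v ∈ F, 0 ≤ ρ v := by
      intro v hv
      by_contra h
      have hmem : v ∈ F.filter (fun u => ρ u < 0) := Finset.mem_filter.mpr ⟨hv, lt_of_not_ge h⟩
      rw [hM] at hmem
      exact absurd hmem (Finset.notMem_empty v)
    have hterm : ∀ v ∈ F, 0 ≤ ρ v * (⟪g v, x₀⟫ + c v) := by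
      intro v hv
      have := hx₀ v (hFS v hv)
      nlinarith [hpos v hv]
    have h8 := (Finset.sum_eq_zero_iff_of_nonneg hterm).mp (hrel x₀) u huF
    rcases mul_eq_zero.mp h8 with h | h
    · exact h
    · exact absurd h (ne_of_gt (hx₀ u (hFS u huF)))

private def AmbigQF (g : (V ≃ᵢ V) → V) (c : (V ≃ᵢ V) → ℝ) (C : Set (V ≃ᵢ V)) (s : V ≃ᵢ V)
    (f : V → V) : Prop :=
  ∀ u ∈ C, ∃ n : (V ≃ᵢ V) →₀ ℤ, (↑n.support ⊆ C) ∧ (Odd (n s) ↔ u = s) ∧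
    ∀ x : V, ⟪g u, f x⟫ + c u = ∑ v ∈ n.support, (n v : ℝ) * (⟪g v, x⟫ + c v)

private lemma ambig_sum_ext (g : (V ≃ᵢ V) → V) (c : (V ≃ᵢ V) → ℝ) (n : (V ≃ᵢ V) →₀ ℤ)
    (T : Finset (V ≃ᵢ V)) (hT : n.support ⊆ T) (x : V) :
    ∑ v ∈ n.support, (n v : ℝ) * (⟪g v, x⟫ + c v) = ∑ v ∈ T, (n v : ℝ) * (⟪g v, x⟫ + c v) :=
  Finset.sum_subset hT (fun v _ hv => by rw [Finsupp.notMem_support_iff.mp hv]; simp)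

private lemma ambig_QF_congr {g : (V ≃ᵢ V) → V} {c : (V ≃ᵢ V) → ℝ} {C : Set (V ≃ᵢ V)}
    {s : V ≃ᵢ V} {f f' : V → V} (h : ∀ x, f x = f' x) (hf : AmbigQF g c C s f) :
    AmbigQF g c C s f' := by
  intro u hu
  obtain ⟨n, h1, h2, h3⟩ := hf u hu
  exact ⟨n, h1, h2, fun x => by rw [← h x]; exact h3 x⟩

private lemma ambig_QF_id (g : (V ≃ᵢ V) → V) (c : (V ≃ᵢ V) → ℝ) (C : Set (V ≃ᵢ V))
    (s : V ≃ᵢ V) : AmbigQF g c C s id := by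
  classical
  intro u huC
  refine ⟨Finsupp.single u 1, ?_, ?_, ?_⟩
  · intro v hv
    rw [Finset.mem_coe] at hv
    have h1 := Finsupp.support_single_subset hv
    rw [Finset.mem_singleton] at h1
    subst h1
    exact huC
  · rw [Finsupp.single_apply]
    by_cases h : u = s
    · simp [h]
    · simp [h, Int.odd_iff]
  · intro x
    rw [ambig_sum_ext g c _ {u} Finsupp.support_single_subset]
    simp

private lemma ambig_QF_gen {g : (V ≃ᵢ V) → V} {c : (V ≃ᵢ V) → ℝ} {C : Set (V ≃ᵢ V)}
    {s : V ≃ᵢ V} (u₀ : V ≃ᵢ V) (hu₀ : u₀ ∈ C)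
    (h₀ : ∀ x : V, u₀ x = x - (⟪g u₀, x⟫ + c u₀) • ((2 / ‖g u₀‖ ^ 2) • g u₀))
    (hint : ∀ u ∈ C, ∃ k : ℤ, ⟪g u, (2 / ‖g u₀‖ ^ 2) • g u₀⟫ = (k : ℝ))
    (heven : u₀ = s → ∀ u ∈ C, ∃ k : ℤ, ⟪g u, (2 / ‖g u₀‖ ^ 2) • g u₀⟫ = 2 * (k : ℝ)) :
    AmbigQF g c C s (⇑u₀) := by
  classical
  intro u huC
  obtain ⟨a, ha⟩ := hint u huC
  refine ⟨Finsupp.single u (1:ℤ) - a • Finsupp.single u₀ (1:ℤ), ?_, ?_, ?_⟩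
  · intro v hv
    rw [Finset.mem_coe] at hv
    have h1 := Finsupp.support_sub hv
    rw [Finset.mem_union] at h1
    rcases h1 with h1 | h1
    · have := Finsupp.support_single_subset h1
      rw [Finset.mem_singleton] at this
      subst this; exact huC
    · have h2 := Finsupp.support_smul h1
      have := Finsupp.support_single_subset h2
      rw [Finset.mem_singleton] at this
      subst this; exact hu₀
  · rw [Finsupp.sub_apply, Finsupp.smul_apply, smul_eq_mul, Finsupp.single_apply,
      Finsupp.single_apply]
    by_cases h0 : u₀ = s
    · obtain ⟨k, hk⟩ := heven h0 u huC
      have hak : a = 2 * k := by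
        have : (a : ℝ) = ((2 * k : ℤ) : ℝ) := by rw [ha] at hk; exact_mod_cast hk
        exact_mod_cast this
      rw [if_pos h0, mul_one, hak, sub_eq_add_neg]
      rw [ambig_odd_add_even ⟨-k, by ring⟩]
      by_cases h : u = s
      · simp [h]
      · simp [h, Int.odd_iff]
    · rw [if_neg h0, mul_zero, sub_zero]
      by_cases h : u = s
      · simp [h]
      · simp [h, Int.odd_iff]
  · intro x
    have hcomp := ambig_pf_comp g c (u := u) (u₀ := u₀) h₀ x
    rw [ha] at hcomp
    have hsub : (Finsupp.single u (1:ℤ) - a • Finsupp.single u₀ (1:ℤ)).support ⊆ insert u {u₀} := by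
      intro v hv
      have h1 := Finsupp.support_sub hv
      rw [Finset.mem_union] at h1
      rw [Finset.mem_insert, Finset.mem_singleton]
      rcases h1 with h1 | h1
      · have := Finsupp.support_single_subset h1
        rw [Finset.mem_singleton] at this
        exact Or.inl this
      · have h2 := Finsupp.support_smul h1
        have := Finsupp.support_single_subset h2
        rw [Finset.mem_singleton] at this
        exact Or.inr this
    rw [ambig_sum_ext g c _ _ hsub, hcomp]
    by_cases h : u = u₀
    · subst h
      rw [Finset.insert_eq_self.mpr (Finset.mem_singleton_self u), Finset.sum_singleton]
      simp only [Finsupp.sub_apply, Finsupp.smul_apply, smul_eq_mul, Finsupp.single_eq_same,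
        mul_one]
      push_cast
      ring
    · rw [Finset.sum_insert (by rw [Finset.mem_singleton]; exact h), Finset.sum_singleton]
      simp only [Finsupp.sub_apply, Finsupp.smul_apply, smul_eq_mul, Finsupp.single_eq_same,
        Finsupp.single_apply, if_neg h, if_neg (Ne.symm h), mul_one, mul_zero]
      push_cast
      ring

private lemma ambig_QF_comp {g : (V ≃ᵢ V) → V} {c : (V ≃ᵢ V) → ℝ} {C : Set (V ≃ᵢ V)}
    {s : V ≃ᵢ V} {f f' : V → V} (h1 : AmbigQF g c C s f) (h2 : AmbigQF g c C s f') :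
    AmbigQF g c C s (fun x => f (f' x)) := by
  classical
  intro u huC
  obtain ⟨n1, hs1, hp1, he1⟩ := h1 u huC
  obtain ⟨N, hNsupp, hNp, hNe⟩ : ∃ N : (V ≃ᵢ V) → ((V ≃ᵢ V) →₀ ℤ),
      (∀ v, ((N v).support : Set (V ≃ᵢ V)) ⊆ C) ∧ (∀ v ∈ C, (Odd ((N v) s) ↔ v = s)) ∧
      (∀ v ∈ C, ∀ x : V, ⟪g v, f' x⟫ + c v
        = ∑ w ∈ (N v).support, ((N v) w : ℝ) * (⟪g w, x⟫ + c w)) := by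
    choose n2 hs2 hp2 he2 using h2
    refine ⟨fun v => if hv : v ∈ C then n2 v hv else 0, ?_, ?_, ?_⟩
    · intro v
      by_cases hv : v ∈ C
      · simp only [dif_pos hv]; exact hs2 v hv
      · simp only [dif_neg hv, Finsupp.support_zero, Finset.coe_empty]
        exact Set.empty_subset _
    · intro v hv; simp only [dif_pos hv]; exact hp2 v hv
    · intro v hv x; simp only [dif_pos hv]; exact he2 v hv x
  set m : (V ≃ᵢ V) →₀ ℤ := ∑ v ∈ n1.support, n1 v • N v with hm
  have hmapp : ∀ w, m w = ∑ v ∈ n1.support, n1 v * (N v) w := by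
    intro w
    rw [hm, Finsupp.finset_sum_apply]
    apply Finset.sum_congr rfl
    intro v _
    rw [Finsupp.smul_apply, smul_eq_mul]
  refine ⟨m, ?_, ?_, ?_⟩
  · intro w hw
    rw [Finset.mem_coe, Finsupp.mem_support_iff] at hw
    by_contra hwC
    apply hw
    rw [hmapp]
    apply Finset.sum_eq_zero
    intro v _
    have hz : (N v) w = 0 := by
      rw [← Finsupp.notMem_support_iff]
      intro hmem
      exact hwC (hNsupp v hmem)
    rw [hz, mul_zero]
  · have hodd : Odd (m s) ↔ Odd (n1 s) := by
      rw [hmapp]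
      by_cases hsupp : s ∈ n1.support
      · rw [← Finset.add_sum_erase _ _ hsupp, add_comm]
        have heven : Even (∑ v ∈ n1.support.erase s, n1 v * (N v) s) := by
          apply ambig_even_sum
          intro v hv
          have hvne : v ≠ s := Finset.ne_of_mem_erase hv
          have hvC : v ∈ C := hs1 (Finset.mem_of_mem_erase hv)
          have hno : ¬ Odd ((N v) s) := by rw [hNp v hvC]; exact hvne
          exact (Int.not_odd_iff_even.mp hno).mul_left _
        rw [ambig_even_add_odd heven, Int.odd_mul]
        have hNss : Odd ((N s) s) := (hNp s (hs1 hsupp)).mpr rfl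
        exact ⟨fun h => h.1, fun h => ⟨h, hNss⟩⟩
      · have hz1 : n1 s = 0 := Finsupp.notMem_support_iff.mp hsupp
        have heven : Even (∑ v ∈ n1.support, n1 v * (N v) s) := by
          apply ambig_even_sum
          intro v hv
          have hvne : v ≠ s := fun h => hsupp (h ▸ hv)
          have hvC : v ∈ C := hs1 hv
          have hno : ¬ Odd ((N v) s) := by rw [hNp v hvC]; exact hvne
          exact (Int.not_odd_iff_even.mp hno).mul_left _
        rw [hz1]
        constructor
        · intro h; exact absurd h (Int.not_odd_iff_even.mpr heven)
        · intro h; exact absurd h (by simp [Int.odd_iff])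
    rw [hodd]
    exact hp1
  · intro x
    have hstep1 : ⟪g u, f (f' x)⟫ + c u
        = ∑ v ∈ n1.support, (n1 v : ℝ) * (⟪g v, f' x⟫ + c v) := he1 (f' x)
    have hsubT : ∀ v ∈ n1.support, (N v).support ⊆
        n1.support.biUnion (fun v => (N v).support) :=
      fun v hv => Finset.subset_biUnion_of_mem (fun v => (N v).support) hv
    have hmT : m.support ⊆ n1.support.biUnion (fun v => (N v).support) := by
      intro w hw
      rw [Finsupp.mem_support_iff] at hw
      by_contra hwT
      apply hw
      rw [hmapp]
      apply Finset.sum_eq_zero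
      intro v hv
      have hz : (N v) w = 0 := by
        rw [← Finsupp.notMem_support_iff]
        intro hmem
        exact hwT (hsubT v hv hmem)
      rw [hz, mul_zero]
    rw [ambig_sum_ext g c m _ hmT, hstep1]
    have hinner : ∀ v ∈ n1.support, (n1 v : ℝ) * (⟪g v, f' x⟫ + c v)
        = ∑ w ∈ n1.support.biUnion (fun v => (N v).support),
            (n1 v : ℝ) * (((N v) w : ℝ) * (⟪g w, x⟫ + c w)) := by
      intro v hv
      rw [hNe v (hs1 hv) x, ambig_sum_ext g c _ _ (hsubT v hv), Finset.mul_sum]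
    rw [Finset.sum_congr rfl hinner, Finset.sum_comm]
    apply Finset.sum_congr rfl
    intro w _
    rw [hmapp]
    push_cast
    rw [Finset.sum_mul]
    apply Finset.sum_congr rfl
    intro v _
    ring

private noncomputable def ambigRefl (g₀ : V) : V →ₗ[ℝ] V where
  toFun v := v - ⟪g₀, v⟫ • ((2 / ‖g₀‖ ^ 2) • g₀)
  map_add' a b := by rw [inner_add_right, add_smul]; abel
  map_smul' r a := by rw [inner_smul_right, RingHom.id_apply]; module

private lemma ambigRefl_apply (g₀ : V) (v : V) :
    ambigRefl g₀ v = v - ⟪g₀, v⟫ • ((2 / ‖g₀‖ ^ 2) • g₀) := rfl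

private lemma ambigRefl_invol {g₀ : V} (h : g₀ ≠ 0) (v : V) :
    ambigRefl g₀ (ambigRefl g₀ v) = v := by
  rw [ambigRefl_apply, ambigRefl_apply, inner_sub_right, real_inner_smul_right,
    ambig_pair_self h]
  module

private lemma ambigRefl_law {g : (V ≃ᵢ V) → V} {c : (V ≃ᵢ V) → ℝ} {u : V ≃ᵢ V}
    (h : ∀ x : V, u x = x - (⟪g u, x⟫ + c u) • ((2 / ‖g u‖ ^ 2) • g u)) (y v : V) :
    u (y + v) = u y + ambigRefl (g u) v := by
  rw [h (y + v), h y, ambigRefl_apply, inner_add_right]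
  module

private lemma ambig_affine
    (S : Set (V ≃ᵢ V)) (g : (V ≃ᵢ V) → V) (c : (V ≃ᵢ V) → ℝ)
    (hrefl : ∀ u ∈ S, ∀ x : V, u x = x - (⟪g u, x⟫ + c u) • ((2 / ‖g u‖ ^ 2) • g u))
    (hgne : ∀ u ∈ S, g u ≠ 0)
    (C : Set (V ≃ᵢ V)) (hCS : C ⊆ S) :
    ∀ w ∈ Subgroup.closure C, ∃ A B : V →ₗ[ℝ] V, (∀ v, A (B v) = v) ∧ (∀ v, B (A v) = v) ∧
      (∀ y v : V, w (y + v) = w y + A v) ∧ (∀ y v : V, w⁻¹ (y + v) = w⁻¹ y + B v) := by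
  intro w hw
  refine Subgroup.closure_induction ?_ ?_ ?_ ?_ hw
  · intro u hu
    have huS := hCS hu
    have hne := hgne u huS
    have hinv : u⁻¹ = u :=
      inv_eq_of_mul_eq_one_right (ambig_refl_sq (hrefl u huS) hne)
    refine ⟨ambigRefl (g u), ambigRefl (g u), ambigRefl_invol hne, ambigRefl_invol hne,
      fun y v => ambigRefl_law (hrefl u huS) y v, fun y v => ?_⟩
    rw [hinv]
    exact ambigRefl_law (hrefl u huS) y v
  · refine ⟨LinearMap.id, LinearMap.id, fun v => rfl, fun v => rfl, fun y v => ?_, fun y v => ?_⟩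
    · simp
    · simp
  · rintro x y _ _ ⟨A1, B1, hab1, hba1, hf1, hb1⟩ ⟨A2, B2, hab2, hba2, hf2, hb2⟩
    refine ⟨A1.comp A2, B2.comp B1, fun v => ?_, fun v => ?_, fun p v => ?_, fun p v => ?_⟩
    · simp only [LinearMap.comp_apply]
      rw [hab2, hab1]
    · simp only [LinearMap.comp_apply]
      rw [hba1, hba2]
    · simp only [LinearMap.comp_apply, IsometryEquiv.mul_apply]
      rw [hf2 p v, hf1 (y p) (A2 v)]
    · simp only [LinearMap.comp_apply]
      rw [mul_inv_rev, IsometryEquiv.mul_apply, IsometryEquiv.mul_apply, hb1 p v,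
        hb2 (x⁻¹ p) (B1 v)]
  · rintro x _ ⟨A, B, hab, hba, hf, hb⟩
    refine ⟨B, A, hba, hab, hb, fun y v => ?_⟩
    rw [inv_inv]
    exact hf y v

end AmbigAux


/-- Let `W` be an affine Weyl group on a Euclidean space, generated by a
set `S` of simple reflections (each `s ∈ S` being the reflection attached to the affine
function `π_s(x) = ⟪g s, x⟫ + c s`, all positive on a common chamber and with pairwise
obtuse, crystallographic gradients which are primitive vectors of a `W`-invariant
lattice `Λ`).  Call `s ∈ S` ambiguous if `⟨Λ, π̄_s^∨⟩ = 2ℤ`.  If `s ∈ S` is ambiguous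
and `t ∈ S` is `W`-conjugate to `s`, then `s = t`. -/
theorem ambiguous_simple_reflection_conjugacy
    {V : Type*} [NormedAddCommGroup V] [InnerProductSpace ℝ V] [FiniteDimensional ℝ V]
    (S : Set (V ≃ᵢ V)) (g : (V ≃ᵢ V) → V) (c : (V ≃ᵢ V) → ℝ)
    (hrefl : ∀ s ∈ S, ∀ x : V, s x = x - (⟪g s, x⟫ + c s) • ((2 / ‖g s‖ ^ 2) • g s))
    (hgne : ∀ s ∈ S, g s ≠ 0)
    (Λ : AddSubgroup V)
    (hΛW : ∀ w ∈ Subgroup.closure S, ∀ v ∈ Λ, w v - w (0 : V) ∈ Λ)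
    (hgΛ : ∀ s ∈ S, g s ∈ Λ)
    (hprim : ∀ s ∈ S, ∀ (m : ℕ) (v : V), v ∈ Λ → (m : ℝ) • v = g s → m = 1)
    (hcrys : ∀ s ∈ S, ∀ t ∈ S, ∃ k : ℤ, ⟪g s, (2 / ‖g t‖ ^ 2) • g t⟫ = (k : ℝ))
    (hobtuse : ∀ s ∈ S, ∀ t ∈ S, s ≠ t → ⟪g s, g t⟫ ≤ 0)
    (hchamber : ∃ x : V, ∀ s ∈ S, 0 < ⟪g s, x⟫ + c s)
    (s : V ≃ᵢ V) (hsS : s ∈ S)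
    (hambig : ∀ v ∈ Λ, ∃ k : ℤ, ⟪v, (2 / ‖g s‖ ^ 2) • g s⟫ = 2 * (k : ℝ))
    (hambig' : ∀ k : ℤ, ∃ v ∈ Λ, ⟪v, (2 / ‖g s‖ ^ 2) • g s⟫ = 2 * (k : ℝ))
    (t : V ≃ᵢ V) (htS : t ∈ S)
    (hconj : ∃ w ∈ Subgroup.closure S, w * s * w⁻¹ = t) :
    s = t := by
  classical
  by_cases hst : s = t
  · exact hst
  exfalso
  obtain ⟨x₀, hx₀⟩ := hchamber
  obtain ⟨w, hw, hconj'⟩ := hconj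
  -- the connected component of `s` in the "non-orthogonality" graph on `S`
  set rel : (V ≃ᵢ V) → (V ≃ᵢ V) → Prop := fun a b => b ∈ S ∧ ⟪g a, g b⟫ ≠ 0 with hreldef
  set C : Set (V ≃ᵢ V) := {u | Relation.ReflTransGen rel s u} with hCdef
  have hsC : s ∈ C := Relation.ReflTransGen.refl
  have hCS : C ⊆ S := by
    intro u hu
    rw [hCdef, Set.mem_setOf_eq] at hu
    induction hu with
    | refl => exact hsS
    | tail _ h _ => exact h.1
  have hCclosed : ∀ u ∈ C, ∀ v ∈ S, ⟪g u, g v⟫ ≠ 0 → v ∈ C := by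
    intro u hu v hv hne
    rw [hCdef, Set.mem_setOf_eq] at hu ⊢
    exact hu.tail ⟨hv, hne⟩
  have hconn : ∀ u ∈ C,
      Relation.ReflTransGen (fun a b => b ∈ C ∧ ⟪g a, g b⟫ ≠ 0) s u := by
    have main : ∀ u : V ≃ᵢ V, Relation.ReflTransGen rel s u →
        Relation.ReflTransGen (fun a b => b ∈ C ∧ ⟪g a, g b⟫ ≠ 0) s u := by
      intro u hu
      induction hu with
      | refl => exact Relation.ReflTransGen.refl
      | @tail b u hab h ih =>
        exact ih.tail ⟨by rw [hCdef, Set.mem_setOf_eq]; exact hab.tail h, h.2⟩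
    intro u hu
    rw [hCdef, Set.mem_setOf_eq] at hu
    exact main u hu
  -- generators in `C` commute with generators outside `C`
  have hcomm0 : ∀ u ∈ C, ∀ v ∈ S, v ∉ C → u * v = v * u := by
    intro u hu v hv hvC
    refine ambig_refl_comm (hrefl u (hCS hu)) (hrefl v hv) ?_
    by_contra hne
    exact hvC (hCclosed u hu v hv hne)
  have hcomm : ∀ a ∈ Subgroup.closure C, ∀ b ∈ Subgroup.closure (S \ C), Commute a b := by
    intro a ha
    refine Subgroup.closure_induction (fun u hu => ?_) (fun b _ => Commute.one_left b)
      (fun x y _ _ hx hy b hb => (hx b hb).mul_left (hy b hb))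
      (fun x _ hx b hb => (hx b hb).inv_left) ha
    intro b hb
    refine Subgroup.closure_induction (fun v hv => ?_) (Commute.one_right u)
      (fun x y _ _ hx hy => hx.mul_right hy) (fun x _ hx => hx.inv_right) hb
    exact hcomm0 u hu v hv.1 hv.2
  -- split `w` into a `C`-part and an `(S \ C)`-part
  have hsplit : ∀ w' ∈ Subgroup.closure S,
      ∃ a ∈ Subgroup.closure C, ∃ b ∈ Subgroup.closure (S \ C), w' = a * b := by
    intro w' hw'
    refine Subgroup.closure_induction (fun u hu => ?_)
      ⟨1, one_mem _, 1, one_mem _, (one_mul 1).symm⟩ (fun x y _ _ hx hy => ?_)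
      (fun x _ hx => ?_) hw'
    · by_cases huC : u ∈ C
      · exact ⟨u, Subgroup.subset_closure huC, 1, one_mem _, (mul_one u).symm⟩
      · exact ⟨1, one_mem _, u, Subgroup.subset_closure ⟨hu, huC⟩, (one_mul u).symm⟩
    · obtain ⟨a1, ha1, b1, hb1, rfl⟩ := hx
      obtain ⟨a2, ha2, b2, hb2, rfl⟩ := hy
      refine ⟨a1 * a2, mul_mem ha1 ha2, b1 * b2, mul_mem hb1 hb2, ?_⟩
      have hc : b1 * a2 = a2 * b1 := ((hcomm a2 ha2 b1 hb1).symm).eq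
      rw [mul_assoc a1 b1, ← mul_assoc b1 a2, hc, mul_assoc a2 b1, ← mul_assoc a1 a2]
    · obtain ⟨a, ha, b, hb, rfl⟩ := hx
      refine ⟨a⁻¹, inv_mem ha, b⁻¹, inv_mem hb, ?_⟩
      rw [mul_inv_rev]
      exact ((hcomm a ha b hb).inv_inv).eq.symm
  obtain ⟨a, haC, b, hbD, hab⟩ := hsplit w hw
  -- the conjugation can be performed inside the component
  have hconjC : a * s * a⁻¹ = t := by
    have hbs : b * s * b⁻¹ = s := by
      have h1 : s * b = b * s := (hcomm s (Subgroup.subset_closure hsC) b hbD).eq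
      rw [← h1, mul_inv_cancel_right]
    have h2 : (a * b) * s * (a * b)⁻¹ = a * (b * s * b⁻¹) * a⁻¹ := by
      rw [mul_inv_rev]
      group
    rw [hab, h2, hbs] at hconj'
    exact hconj'
  -- integral expansions along the component
  have hQF : ∀ v ∈ Subgroup.closure C, AmbigQF g c C s ⇑v ∧ AmbigQF g c C s ⇑(v⁻¹) := by
    intro v hv
    refine Subgroup.closure_induction (fun u hu => ?_) ⟨?_, ?_⟩
      (fun x y _ _ hx hy => ⟨?_, ?_⟩) (fun x _ hx => ⟨hx.2, by rw [inv_inv]; exact hx.1⟩) hv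
    · have hgen : AmbigQF g c C s ⇑u := by
        refine ambig_QF_gen u hu (hrefl u (hCS hu))
          (fun q hq => hcrys q (hCS hq) u (hCS hu)) (fun h0 q hq => ?_)
        subst h0
        exact hambig (g q) (hgΛ q (hCS hq))
      have hinv : u⁻¹ = u :=
        inv_eq_of_mul_eq_one_right (ambig_refl_sq (hrefl u (hCS hu)) (hgne u (hCS hu)))
      exact ⟨hgen, by rw [hinv]; exact hgen⟩
    · exact ambig_QF_congr (fun x => rfl) (ambig_QF_id g c C s)
    · rw [inv_one]
      exact ambig_QF_congr (fun x => rfl) (ambig_QF_id g c C s)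
    · exact ambig_QF_congr (fun p => (IsometryEquiv.mul_apply x y p).symm)
        (ambig_QF_comp hx.1 hy.1)
    · rw [mul_inv_rev]
      exact ambig_QF_congr (fun p => (IsometryEquiv.mul_apply y⁻¹ x⁻¹ p).symm)
        (ambig_QF_comp hy.2 hx.2)
  -- the affine structure of the conjugator
  obtain ⟨A, B, hAB, hBA, hAfwd, hAbwd⟩ :=
    ambig_affine S g c hrefl hgne C hCS a haC
  -- the reflection equation transported by the conjugator
  have hfun : ∀ x : V, (⟪g t, x⟫ + c t) • ((2 / ‖g t‖ ^ 2) • g t)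
      = (⟪g s, a⁻¹ x⟫ + c s) • A ((2 / ‖g s‖ ^ 2) • g s) := by
    intro x
    have h1 : t x = a (s (a⁻¹ x)) := by
      rw [← hconjC]
      rfl
    rw [hrefl t htS x, hrefl s hsS (a⁻¹ x)] at h1
    have h2 : a ((a⁻¹ : V ≃ᵢ V) x - (⟪g s, (a⁻¹ : V ≃ᵢ V) x⟫ + c s) • ((2 / ‖g s‖ ^ 2) • g s))
        = x - (⟪g s, (a⁻¹ : V ≃ᵢ V) x⟫ + c s) • A ((2 / ‖g s‖ ^ 2) • g s) := by
      rw [sub_eq_add_neg, ← neg_smul, hAfwd ((a⁻¹ : V ≃ᵢ V) x), map_smul, neg_smul,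
        ← sub_eq_add_neg, IsometryEquiv.apply_inv_self]
    rw [h2] at h1
    exact sub_right_inj.mp h1
  -- scalar form
  have hαt_ne : ((2 / ‖g t‖ ^ 2) • g t : V) ≠ 0 := by
    apply smul_ne_zero ?_ (hgne t htS)
    have : ‖g t‖ ≠ 0 := norm_ne_zero_iff.mpr (hgne t htS)
    positivity
  have hNt : (0:ℝ) < ‖(2 / ‖g t‖ ^ 2) • g t‖ ^ 2 := by
    have := norm_ne_zero_iff.mpr hαt_ne
    positivity
  have hsc : ∀ x : V, (⟪g t, x⟫ + c t) * ‖(2 / ‖g t‖ ^ 2) • g t‖ ^ 2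
      = (⟪g s, a⁻¹ x⟫ + c s) * ⟪(2 / ‖g t‖ ^ 2) • g t, A ((2 / ‖g s‖ ^ 2) • g s)⟫ := by
    intro x
    have := congrArg (fun z => ⟪((2 / ‖g t‖ ^ 2) • g t : V), z⟫) (hfun x)
    simpa [real_inner_smul_right, real_inner_self_eq_norm_sq, mul_comm] using this
  set K : ℝ := ⟪(2 / ‖g t‖ ^ 2) • g t, A ((2 / ‖g s‖ ^ 2) • g s)⟫ with hKdef
  have hK : K ≠ 0 := by
    intro h0
    have h1 := hsc x₀
    rw [h0, mul_zero] at h1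
    rcases mul_eq_zero.mp h1 with h | h
    · exact absurd h (ne_of_gt (hx₀ t htS))
    · exact absurd h (ne_of_gt hNt)
  set c₀ : ℝ := ‖(2 / ‖g t‖ ^ 2) • g t‖ ^ 2 / K with hc₀def
  have hc₀ : c₀ ≠ 0 := div_ne_zero (ne_of_gt hNt) hK
  have hπs : ∀ x : V, ⟪g s, a⁻¹ x⟫ + c s = c₀ * (⟪g t, x⟫ + c t) := by
    intro x
    have h1 := hsc x
    have h2 : (⟪g s, a⁻¹ x⟫ + c s) = (⟪g s, a⁻¹ x⟫ + c s) * K / K := by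
      rw [mul_div_cancel_right₀ _ hK]
    rw [hc₀def, h2, ← h1]
    ring
  -- the expansion of `π_s ∘ a⁻¹`
  obtain ⟨n, hnsupp, hnp, hne⟩ := (hQF a haC).2 s hsC
  have hexp : ∀ x : V, ∑ v ∈ n.support, (n v : ℝ) * (⟪g v, x⟫ + c v)
      = c₀ * (⟪g t, x⟫ + c t) := by
    intro x
    rw [← hne x]
    exact hπs x
  -- `t` belongs to the component
  have htC : t ∈ C := by
    by_contra htC
    have horth : ∀ v ∈ C, ⟪g v, g t⟫ = 0 := by
      intro v hv
      by_contra hne0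
      exact htC (hCclosed v hv t htS hne0)
    have hd1 := hexp (x₀ + g t)
    have hd0 := hexp x₀
    have hdiff : ∑ v ∈ n.support, (n v : ℝ) * ⟪g v, g t⟫ = c₀ * ⟪g t, g t⟫ := by
      have h3 : ∑ v ∈ n.support, ((n v : ℝ) * (⟪g v, x₀ + g t⟫ + c v)
          - (n v : ℝ) * (⟪g v, x₀⟫ + c v))
          = c₀ * (⟪g t, x₀ + g t⟫ + c t) - c₀ * (⟪g t, x₀⟫ + c t) := by
        rw [Finset.sum_sub_distrib, hd1, hd0]
      calc ∑ v ∈ n.support, (n v : ℝ) * ⟪g v, g t⟫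
          = ∑ v ∈ n.support, ((n v : ℝ) * (⟪g v, x₀ + g t⟫ + c v)
              - (n v : ℝ) * (⟪g v, x₀⟫ + c v)) := by
            apply Finset.sum_congr rfl
            intro v _
            rw [inner_add_right]
            ring
        _ = c₀ * (⟪g t, x₀ + g t⟫ + c t) - c₀ * (⟪g t, x₀⟫ + c t) := h3
        _ = c₀ * ⟪g t, g t⟫ := by rw [inner_add_right]; ring
    have hzero : ∑ v ∈ n.support, (n v : ℝ) * ⟪g v, g t⟫ = 0 := by
      apply Finset.sum_eq_zero
      intro v hv
      rw [horth v (hnsupp hv), mul_zero]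
    rw [hzero] at hdiff
    have hgtne : ⟪g t, g t⟫ ≠ 0 := by
      rw [real_inner_self_eq_norm_sq]
      have : ‖g t‖ ≠ 0 := norm_ne_zero_iff.mpr (hgne t htS)
      positivity
    rcases mul_eq_zero.mp hdiff.symm with h | h
    · exact absurd h hc₀
    · exact absurd h hgtne
  -- final contradiction via linear independence over the component
  have hsmem : s ∈ n.support := by
    rw [Finsupp.mem_support_iff]
    intro h0
    have hodd := hnp.mpr rfl
    rw [h0] at hodd
    simp [Int.odd_iff] at hodd
  set F : Finset (V ≃ᵢ V) := insert t n.support with hFdef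
  have hFC : ↑F ⊆ C := by
    intro v hv
    rw [hFdef, Finset.coe_insert, Set.mem_insert_iff] at hv
    rcases hv with h | h
    · subst h; exact htC
    · exact hnsupp h
  set ρ : (V ≃ᵢ V) → ℝ := fun v => (n v : ℝ) - (if v = t then c₀ else 0) with hρdef
  have hrelF : ∀ x : V, ∑ v ∈ F, ρ v * (⟪g v, x⟫ + c v) = 0 := by
    intro x
    have hA1 : ∑ v ∈ F, (n v : ℝ) * (⟪g v, x⟫ + c v) = c₀ * (⟪g t, x⟫ + c t) := by
      rw [← ambig_sum_ext g c n F (by rw [hFdef]; exact Finset.subset_insert t _) x]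
      exact hexp x
    have hA2 : ∑ v ∈ F, (if v = t then c₀ else 0) * (⟪g v, x⟫ + c v)
        = c₀ * (⟪g t, x⟫ + c t) := by
      have hco : ∀ v ∈ F, (if v = t then c₀ else 0) * (⟪g v, x⟫ + c v)
          = (if v = t then c₀ * (⟪g v, x⟫ + c v) else 0) := by
        intro v _
        split <;> simp
      rw [Finset.sum_congr rfl hco]
      rw [Finset.sum_ite_eq' F t (fun v => c₀ * (⟪g v, x⟫ + c v))]
      rw [if_pos (show t ∈ F by rw [hFdef]; exact Finset.mem_insert_self t _)]
    calc ∑ v ∈ F, ρ v * (⟪g v, x⟫ + c v)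
        = ∑ v ∈ F, ((n v : ℝ) * (⟪g v, x⟫ + c v)
            - (if v = t then c₀ else 0) * (⟪g v, x⟫ + c v)) := by
          apply Finset.sum_congr rfl
          intro v _
          rw [hρdef]
          ring
      _ = 0 := by rw [Finset.sum_sub_distrib, hA1, hA2, sub_self]
  have hfinal := ambig_indep S g c hobtuse x₀ hx₀ C hCS s hsC hconn F hFC ρ hrelF s
    (by rw [hFdef]; exact Finset.mem_insert_of_mem hsmem)
  rw [hρdef] at hfinal
  simp only [if_neg hst] at hfinal
  have hcast : (n s : ℝ) = 0 := by linarith [hfinal]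
  have hns : n s = 0 := by exact_mod_cast hcast
  have hodd := hnp.mpr rfl
  rw [hns] at hodd
  simp [Int.odd_iff] at hodd
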